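/- Suppose J : H → H is Lipschitz continuous and that the map T̃ : D → D, d ↦ C*(J(C d)), is ℝ-linear and firmly nonexpansive. Let λ ∈ (0,2) be a constant, let u0 ∈ H, set w0 := C* u0, and define u_{k+1} := (1 − λ)·u_k + λ·T(u_k), where T := J ∘ M and M := C ∘ C*. Then Fix T̃ = ker(T̃ − Id) is a closed linear subspace of D, and both sequences (T(u_k)) and (u_k) converge strongly (in norm) to u* := J(C(P w0)), where P is the orthogonal projection of D onto Fix T̃. -/

import Mathlib

open Filter

private lemma aux_seq_tendsto_zero {a c : ℕ → ℝ} {r : ℝ} (hr0 : 0 ≤ r) (hr1 : r < 1)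
    (ha : ∀ k, 0 ≤ a k) (hrecur : ∀ k, a (k + 1) ≤ r * a k + c k)
    (hc : Tendsto c atTop (nhds 0)) : Tendsto a atTop (nhds 0) := by
  rw [Metric.tendsto_atTop] at hc ⊢
  intro ε hε
  obtain ⟨N, hN⟩ := hc ((1 - r) * (ε / 2)) (by nlinarith)
  have key : ∀ m, a (N + m) ≤ ε / 2 + r ^ m * a N := by
    intro m
    induction m with
    | zero => simp; linarith [ha N, hε]
    | succ m ih =>
      have h1 : a (N + m + 1) ≤ r * a (N + m) + c (N + m) := hrecur (N + m)
      have h2 : c (N + m) ≤ (1 - r) * (ε / 2) := by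
        have := hN (N + m) (Nat.le_add_right _ _)
        rw [Real.dist_eq, sub_zero] at this
        exact le_of_lt (lt_of_abs_lt this)
      have h3 : r * a (N + m) ≤ r * (ε / 2 + r ^ m * a N) :=
        mul_le_mul_of_nonneg_left ih hr0
      have : a (N + (m + 1)) = a (N + m + 1) := by ring_nf
      rw [this]
      calc a (N + m + 1) ≤ r * (ε / 2 + r ^ m * a N) + (1 - r) * (ε / 2) := by linarith
        _ = ε / 2 + r ^ (m + 1) * a N := by ring
  have hpow : Tendsto (fun m => r ^ m * a N) atTop (nhds 0) := by
    simpa using (tendsto_pow_atTop_nhds_zero_of_lt_one hr0 hr1).mul_const (a N)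
  rw [Metric.tendsto_atTop] at hpow
  obtain ⟨M, hM⟩ := hpow (ε / 2) (by nlinarith)
  refine ⟨N + M, fun n hn => ?_⟩
  have h1 : a n ≤ ε / 2 + r ^ (n - N) * a N := by
    have := key (n - N)
    rwa [Nat.add_sub_cancel' (le_trans (Nat.le_add_right _ _) hn)] at this
  have h2 : r ^ (n - N) * a N < ε / 2 := by
    have := hM (n - N) (by omega)
    rw [Real.dist_eq, sub_zero] at this
    exact lt_of_abs_lt this
  rw [Real.dist_eq, sub_zero]
  rw [abs_of_nonneg (ha n)]
  linarith
open Filter ContinuousLinearMap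
open scoped RealInnerProductSpace

private lemma aux_pow_tendsto {D : Type*} [NormedAddCommGroup D] [InnerProductSpace ℝ D]
    [CompleteSpace D] (S : D →L[ℝ] D) (K : Submodule ℝ D) [Submodule.HasOrthogonalProjection K]
    (hK : ∀ d : D, d ∈ K ↔ S d = d)
    (hS : ∀ d : D, ‖S d‖ ≤ ‖d‖)
    (hreg : ∀ d : D, Tendsto (fun n => (S ^ (n + 1)) d - (S ^ n) d) atTop (nhds 0))
    (x : D) :
    Tendsto (fun n => (S ^ n) x) atTop (nhds (Submodule.orthogonalProjectionOnto K x : D)) := by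
  have hpow : ∀ n (d : D), ‖(S ^ n) d‖ ≤ ‖d‖ := by
    intro n
    induction n with
    | zero => intro d; simp
    | succ n ih =>
      intro d
      rw [pow_succ, ContinuousLinearMap.mul_apply]
      exact le_trans (ih (S d)) (hS d)
  have hSnorm1 : ‖S‖ ≤ 1 := S.opNorm_le_bound zero_le_one (fun d => by simpa using hS d)
  -- fixed points of an operator of norm ≤ 1 are fixed points of the adjoint
  have hadj : ∀ (A : D →L[ℝ] D), ‖A‖ ≤ 1 → ∀ y : D, A y = y →
      ContinuousLinearMap.adjoint A y = y := by
    intro A hA y hy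
    apply eq_of_norm_le_re_inner_eq_norm_sq (𝕜 := ℝ)
    · calc ‖ContinuousLinearMap.adjoint A y‖ ≤ ‖ContinuousLinearMap.adjoint A‖ * ‖y‖ :=
        le_opNorm _ _
      _ ≤ 1 * ‖y‖ := by
        have hnorm : ‖ContinuousLinearMap.adjoint A‖ = ‖A‖ :=
          (ContinuousLinearMap.adjoint (𝕜 := ℝ)).norm_map A
        rw [hnorm]
        exact mul_le_mul_of_nonneg_right hA (norm_nonneg _)
      _ = ‖y‖ := one_mul _
    · rw [ContinuousLinearMap.adjoint_inner_left, hy]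
      simp [real_inner_self_eq_norm_sq]
  -- the orthogonal complement of K is contained in the closure of range (S - 1)
  have hsub : Kᗮ ≤ (LinearMap.range ((S - 1 : D →L[ℝ] D) : D →ₗ[ℝ] D)).topologicalClosure := by
    rw [← Submodule.orthogonal_orthogonal_eq_closure]
    apply Submodule.orthogonal_le
    intro z hz
    rw [hK]
    have hadjfix : ContinuousLinearMap.adjoint S z = z := by
      apply ext_inner_left ℝ
      intro v
      rw [ContinuousLinearMap.adjoint_inner_right]
      have h0 : ⟪(S - 1) v, z⟫ = 0 :=
        (Submodule.mem_orthogonal _ _).mp hz _ (LinearMap.mem_range.mpr ⟨v, rfl⟩)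
      rw [ContinuousLinearMap.sub_apply, ContinuousLinearMap.one_apply, inner_sub_left,
        sub_eq_zero] at h0
      exact h0
    have := hadj (ContinuousLinearMap.adjoint S)
      (by rw [(ContinuousLinearMap.adjoint (𝕜 := ℝ)).norm_map S]; exact hSnorm1) z hadjfix
    rwa [ContinuousLinearMap.adjoint_adjoint] at this
  set P : D := (Submodule.orthogonalProjectionOnto K x : D) with hP
  set y : D := x - P with hy
  have hymem : y ∈ Kᗮ := Submodule.sub_starProjection_mem_orthogonal x
  have hyc : y ∈ closure (LinearMap.range ((S - 1 : D →L[ℝ] D) : D →ₗ[ℝ] D) : Set D) := by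
    have := hsub hymem
    rwa [← Submodule.topologicalClosure_coe]
  have hy0 : Tendsto (fun n => (S ^ n) y) atTop (nhds 0) := by
    rw [NormedAddCommGroup.tendsto_nhds_zero]
    intro ε hε
    obtain ⟨z, hz_mem, hz_dist⟩ := Metric.mem_closure_iff.mp hyc (ε / 2) (by positivity)
    obtain ⟨w, hw⟩ := hz_mem
    have hzn : Tendsto (fun n => (S ^ n) z) atTop (nhds 0) := by
      refine (hreg w).congr fun n => ?_
      rw [← hw, ContinuousLinearMap.coe_coe, ContinuousLinearMap.sub_apply, ContinuousLinearMap.one_apply, map_sub,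
        pow_succ, ContinuousLinearMap.mul_apply]
    have hev : ∀ᶠ n in atTop, ‖(S ^ n) z‖ < ε / 2 :=
      (NormedAddCommGroup.tendsto_nhds_zero.mp hzn) (ε / 2) (by positivity)
    filter_upwards [hev] with n hn
    have hdecomp : (S ^ n) y = (S ^ n) (y - z) + (S ^ n) z := by
      rw [← map_add]; congr 1; abel
    calc ‖(S ^ n) y‖ = ‖(S ^ n) (y - z) + (S ^ n) z‖ := by rw [hdecomp]
      _ ≤ ‖(S ^ n) (y - z)‖ + ‖(S ^ n) z‖ := norm_add_le _ _
      _ ≤ ‖y - z‖ + ‖(S ^ n) z‖ := by gcongr; exact hpow n _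
      _ < ε / 2 + ε / 2 := by
          rw [dist_eq_norm] at hz_dist
          exact add_lt_add hz_dist hn
      _ = ε := add_halves ε
  have hPfix : ∀ n, (S ^ n) P = P := by
    intro n
    induction n with
    | zero => simp
    | succ n ih =>
      rw [pow_succ, ContinuousLinearMap.mul_apply, (hK P).mp (Submodule.orthogonalProjectionOnto K x).2, ih]
  have hxdecomp : ∀ n, (S ^ n) x = (S ^ n) y + P := by
    intro n
    conv_lhs => rw [show x = y + P by rw [hy]; abel]
    rw [map_add, hPfix]
  simpa [hxdecomp] using hy0.add (tendsto_const_nhds (x := P))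

set_option maxHeartbeats 1000000 in
/-- Strong convergence of the PPP sequence when the reduced operator `T̃ = C* ∘ J ∘ C` is
linear and firmly nonexpansive and `J` is Lipschitz: both `(T u_k)` and `(u_k)` converge in
norm to `u* = J (C (P (C* u0)))`, where `P` is the orthogonal projection onto
`Fix T̃ = ker (T̃ - Id)`. -/
theorem stmt_10
    {H D : Type*} [NormedAddCommGroup H] [InnerProductSpace ℝ H] [CompleteSpace H]
    [NormedAddCommGroup D] [InnerProductSpace ℝ D] [CompleteSpace D]
    (C : D →L[ℝ] H) (J : H → H)
    (hJ : ∃ K : NNReal, LipschitzWith K J)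
    (Tt : D →L[ℝ] D)
    (hTt : ∀ d : D, Tt d = ContinuousLinearMap.adjoint C (J (C d)))
    (hfne : ∀ v w : D, ‖Tt v - Tt w‖ ^ 2 ≤ ⟪v - w, Tt v - Tt w⟫)
    (lam : ℝ) (hlam : lam ∈ Set.Ioo (0 : ℝ) 2)
    (u0 : H) (u : ℕ → H) (hu0 : u 0 = u0)
    (hrec : ∀ k, u (k + 1)
      = (1 - lam) • u k + lam • J (C (ContinuousLinearMap.adjoint C (u k)))) :
    {d : D | Tt d = d} = (LinearMap.ker ((Tt - ContinuousLinearMap.id ℝ D : D →L[ℝ] D) : D →ₗ[ℝ] D) : Set D) ∧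
      IsClosed ((LinearMap.ker ((Tt - ContinuousLinearMap.id ℝ D : D →L[ℝ] D) : D →ₗ[ℝ] D) : Submodule ℝ D) : Set D) ∧
      Filter.Tendsto (fun k => J (C (ContinuousLinearMap.adjoint C (u k)))) Filter.atTop
        (nhds (J (C (Submodule.orthogonalProjectionOnto (LinearMap.ker ((Tt - ContinuousLinearMap.id ℝ D : D →L[ℝ] D) : D →ₗ[ℝ] D))
          (ContinuousLinearMap.adjoint C u0) : D)))) ∧
      Filter.Tendsto u Filter.atTop
        (nhds (J (C (Submodule.orthogonalProjectionOnto (LinearMap.ker ((Tt - ContinuousLinearMap.id ℝ D : D →L[ℝ] D) : D →ₗ[ℝ] D))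
          (ContinuousLinearMap.adjoint C u0) : D)))) := by
  obtain ⟨hlam0, hlam2⟩ := hlam
  have fne0 : ∀ d : D, ‖Tt d‖ ^ 2 ≤ ⟪d, Tt d⟫ := fun d => by simpa using hfne d 0
  set S : D →L[ℝ] D := (1 - lam) • 1 + lam • Tt with hSdef
  have hSapp : ∀ d : D, S d = d + lam • (Tt d - d) := fun d => by
    simp only [hSdef, ContinuousLinearMap.add_apply, ContinuousLinearMap.smul_apply,
      ContinuousLinearMap.one_apply]
    module
  -- key energy inequality for the averaged operator
  have hkey : ∀ d : D, ‖S d‖ ^ 2 + (2 - lam) * lam * ‖Tt d - d‖ ^ 2 ≤ ‖d‖ ^ 2 := by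
    intro d
    have h3 : ‖S d‖ ^ 2
        = ‖d‖ ^ 2 + 2 * (lam * ⟪d, Tt d - d⟫) + lam ^ 2 * ‖Tt d - d‖ ^ 2 := by
      rw [hSapp, norm_add_sq_real, real_inner_smul_right, norm_smul, Real.norm_eq_abs,
        mul_pow, sq_abs]
    have h4 : ⟪d, Tt d - d⟫ = ⟪d, Tt d⟫ - ‖d‖ ^ 2 := by
      rw [inner_sub_right, real_inner_self_eq_norm_sq]
    have h5 : ‖Tt d - d‖ ^ 2 = ‖Tt d‖ ^ 2 - 2 * ⟪d, Tt d⟫ + ‖d‖ ^ 2 := by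
      rw [norm_sub_sq_real, real_inner_comm]
    have h7 : ‖Tt d - d‖ ^ 2 ≤ ‖d‖ ^ 2 - ⟪d, Tt d⟫ := by linarith [fne0 d]
    have h8 : lam * ‖Tt d - d‖ ^ 2 ≤ lam * (‖d‖ ^ 2 - ⟪d, Tt d⟫) :=
      mul_le_mul_of_nonneg_left h7 hlam0.le
    rw [h3, h4]
    nlinarith [h8]
  have hSle : ∀ d : D, ‖S d‖ ≤ ‖d‖ := by
    intro d
    have h1 := hkey d
    have h2 : 0 ≤ (2 - lam) * lam * ‖Tt d - d‖ ^ 2 :=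
      mul_nonneg (mul_nonneg (by linarith) hlam0.le) (sq_nonneg _)
    nlinarith [norm_nonneg (S d), norm_nonneg d]
  have hpowapp : ∀ n (d : D), (S ^ (n + 1)) d = S ((S ^ n) d) := fun n d => by
    rw [pow_succ', ContinuousLinearMap.mul_apply]
  -- asymptotic regularity
  have hreg : ∀ d : D, Filter.Tendsto (fun n => (S ^ (n + 1)) d - (S ^ n) d)
      Filter.atTop (nhds 0) := by
    intro d
    set a : ℕ → ℝ := fun n => ‖(S ^ n) d‖ ^ 2 with ha
    have hmono : ∀ n, a (n + 1) + (2 - lam) * lam * ‖Tt ((S ^ n) d) - (S ^ n) d‖ ^ 2 ≤ a n := by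
      intro n
      have := hkey ((S ^ n) d)
      simpa only [ha, hpowapp n d] using this
    have hanti : Antitone a := antitone_nat_of_succ_le fun n => by
      have h2 : 0 ≤ (2 - lam) * lam * ‖Tt ((S ^ n) d) - (S ^ n) d‖ ^ 2 :=
        mul_nonneg (mul_nonneg (by linarith) hlam0.le) (sq_nonneg _)
      linarith [hmono n]
    have hbdd : BddBelow (Set.range a) := ⟨0, by rintro x ⟨n, rfl⟩; exact sq_nonneg _⟩
    have halim : Filter.Tendsto a Filter.atTop (nhds (⨅ n, a n)) :=
      tendsto_atTop_ciInf hanti hbdd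
    have hdiff : Filter.Tendsto (fun n => a n - a (n + 1)) Filter.atTop (nhds 0) := by
      have := halim.sub (halim.comp (tendsto_add_atTop_nat 1))
      simpa using this
    have hc : (0 : ℝ) < (2 - lam) * lam := by nlinarith
    have hb0 : Filter.Tendsto (fun n => ‖Tt ((S ^ n) d) - (S ^ n) d‖ ^ 2)
        Filter.atTop (nhds 0) := by
      have hglim : Filter.Tendsto (fun n => (a n - a (n + 1)) / ((2 - lam) * lam))
          Filter.atTop (nhds 0) := by
        simpa using hdiff.div_const ((2 - lam) * lam)
      refine squeeze_zero (fun n => sq_nonneg _) (fun n => ?_) hglim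
      rw [le_div_iff₀ hc]
      linarith [hmono n]
    have hv : Filter.Tendsto (fun n => Tt ((S ^ n) d) - (S ^ n) d) Filter.atTop (nhds 0) := by
      rw [tendsto_zero_iff_norm_tendsto_zero]
      have hsq := (Real.continuous_sqrt.tendsto 0).comp hb0
      have heq : ((fun x => Real.sqrt x) ∘ fun n => ‖Tt ((S ^ n) d) - (S ^ n) d‖ ^ 2)
          = fun n => ‖Tt ((S ^ n) d) - (S ^ n) d‖ := by
        funext n
        simp [Function.comp, Real.sqrt_sq (norm_nonneg _)]
      rw [heq] at hsq
      simpa using hsq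
    have hdelta : ∀ n, (S ^ (n + 1)) d - (S ^ n) d = lam • (Tt ((S ^ n) d) - (S ^ n) d) := by
      intro n
      rw [hpowapp n d, hSapp]
      module
    have := hv.const_smul lam
    simp only [smul_zero] at this
    exact this.congr fun n => (hdelta n).symm
  -- fixed points of S = kernel of Tt - id
  have hKchar : ∀ d : D, d ∈ LinearMap.ker ((Tt - ContinuousLinearMap.id ℝ D : D →L[ℝ] D) : D →ₗ[ℝ] D) ↔ S d = d := by
    intro d
    rw [LinearMap.mem_ker]
    constructor
    · intro h
      have hTd : Tt d - d = 0 := by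
        simpa [ContinuousLinearMap.sub_apply] using h
      rw [hSapp, hTd, smul_zero, add_zero]
    · intro h
      have h2 : d + lam • (Tt d - d) = d := by rw [← hSapp]; exact h
      have h3 : lam • (Tt d - d) = 0 := by
        have := add_eq_left.mp h2
        exact this
      have hTd : Tt d - d = 0 := by
        rcases smul_eq_zero.mp h3 with h' | h'
        · exact absurd h' (ne_of_gt hlam0)
        · exact h'
      simpa [ContinuousLinearMap.sub_apply] using hTd
  have hwrec : ∀ k, ContinuousLinearMap.adjoint C (u (k + 1))
      = S (ContinuousLinearMap.adjoint C (u k)) := by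
    intro k
    rw [hrec k, map_add, map_smul, map_smul, ← hTt, hSapp]
    module
  have hwpow : ∀ k, ContinuousLinearMap.adjoint C (u k)
      = (S ^ k) (ContinuousLinearMap.adjoint C u0) := by
    intro k
    induction k with
    | zero => simp [hu0]
    | succ k ih => rw [hwrec k, ih, hpowapp]
  have hwlim : Filter.Tendsto (fun k => ContinuousLinearMap.adjoint C (u k)) Filter.atTop
      (nhds (Submodule.orthogonalProjectionOnto (LinearMap.ker ((Tt - ContinuousLinearMap.id ℝ D : D →L[ℝ] D) : D →ₗ[ℝ] D))
        (ContinuousLinearMap.adjoint C u0) : D)) := by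
    have := aux_pow_tendsto S _ hKchar hSle hreg (ContinuousLinearMap.adjoint C u0)
    exact this.congr fun k => (hwpow k).symm
  obtain ⟨KJ, hJlip⟩ := hJ
  have hJcont : Continuous J := hJlip.continuous
  set ustar : H := J (C (Submodule.orthogonalProjectionOnto (LinearMap.ker
    ((Tt - ContinuousLinearMap.id ℝ D : D →L[ℝ] D) : D →ₗ[ℝ] D)) (ContinuousLinearMap.adjoint C u0) : D)) with hustar
  have hvlim : Filter.Tendsto (fun k => J (C (ContinuousLinearMap.adjoint C (u k))))
      Filter.atTop (nhds ustar) := by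
    have := ((hJcont.comp C.continuous).tendsto _).comp hwlim
    exact this
  have hulim : Filter.Tendsto u Filter.atTop (nhds ustar) := by
    rw [tendsto_iff_norm_sub_tendsto_zero]
    have hr1 : |1 - lam| < 1 := abs_lt.mpr ⟨by linarith, by linarith⟩
    apply aux_seq_tendsto_zero (c := fun k => |lam| * ‖J (C (ContinuousLinearMap.adjoint C (u k)))
      - ustar‖) (abs_nonneg (1 - lam)) hr1 (fun k => norm_nonneg _)
    · intro k
      have hdec : u (k + 1) - ustar = (1 - lam) • (u k - ustar)
          + lam • (J (C (ContinuousLinearMap.adjoint C (u k))) - ustar) := by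
        rw [hrec k]
        module
      calc ‖u (k + 1) - ustar‖
          ≤ ‖(1 - lam) • (u k - ustar)‖
            + ‖lam • (J (C (ContinuousLinearMap.adjoint C (u k))) - ustar)‖ := by
            rw [hdec]; exact norm_add_le _ _
        _ = |1 - lam| * ‖u k - ustar‖
            + |lam| * ‖J (C (ContinuousLinearMap.adjoint C (u k))) - ustar‖ := by
            rw [norm_smul, norm_smul, Real.norm_eq_abs, Real.norm_eq_abs]
    · have hnv : Filter.Tendsto
          (fun k => ‖J (C (ContinuousLinearMap.adjoint C (u k))) - ustar‖)
          Filter.atTop (nhds 0) := tendsto_iff_norm_sub_tendsto_zero.mp hvlim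
      simpa using hnv.const_mul |lam|
  refine ⟨?_, ContinuousLinearMap.isClosed_ker _, hvlim, hulim⟩
  ext d
  simp [LinearMap.mem_ker, ContinuousLinearMap.sub_apply, sub_eq_zero]
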